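/- Let μ > 0 and 0 ≤ A < (√2 − 1)·√μ. Let u : ℝ → ℝ be twice differentiable with u''(t) = −u(t)·(u(t)² − μ), u(0) = A + √μ, and u'(0) = 0. Then 0 < u(t) ≤ A + √μ for all t ∈ ℝ. In particular, the solution stays forever on the positive side, around the Lyapunov-stable steady state √μ (type i confined oscillation), and no transition to the other stable state −√μ occurs. -/
import Mathlib


/-- Below the threshold amplitude the oscillation is confined (type i): if
`μ > 0`, `0 ≤ A < (√2 − 1)·√μ`, and `u'' = −u(u² − μ)` with `u(0) = A + √μ`,
`u'(0) = 0`, then `0 < u(t) ≤ A + √μ` for all `t`. -/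
theorem stmt_9 (μ A : ℝ) (hμ : 0 < μ) (hA : 0 ≤ A)
    (hAlt : A < (Real.sqrt 2 - 1) * Real.sqrt μ) (u : ℝ → ℝ)
    (hu : Differentiable ℝ u) (hu' : Differentiable ℝ (deriv u))
    (hode : ∀ t : ℝ, deriv (deriv u) t = -u t * (u t ^ 2 - μ))
    (h0 : u 0 = A + Real.sqrt μ) (h0' : deriv u 0 = 0) :
    ∀ t : ℝ, 0 < u t ∧ u t ≤ A + Real.sqrt μ := by
  set s := Real.sqrt μ with hsdef
  have hs : 0 < s := Real.sqrt_pos.mpr hμ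
  have hs2 : s ^ 2 = μ := Real.sq_sqrt hμ.le
  have h2 : (Real.sqrt 2) ^ 2 = 2 := Real.sq_sqrt (by norm_num)
  set E : ℝ → ℝ := fun t => (deriv u t) ^ 2 / 2 + ((u t) ^ 4 / 4 - μ * (u t) ^ 2 / 2)
    with hEdef
  have hEd : ∀ t, HasDerivAt E 0 t := by
    intro t
    have h1 : HasDerivAt u (deriv u t) t := (hu t).hasDerivAt
    have h2 : HasDerivAt (deriv u) (deriv (deriv u) t) t := (hu' t).hasDerivAt
    have hD : HasDerivAt E
        ((2 * deriv u t ^ 1 * deriv (deriv u) t) / 2 +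
          ((4 * u t ^ 3 * deriv u t) / 4 - μ * (2 * u t ^ 1 * deriv u t) / 2)) t := by
      exact (((h2.pow 2).div_const 2).add
        ((((h1.pow 4).div_const 4).sub (((h1.pow 2).const_mul μ).div_const 2))))
    convert hD using 1
    rw [hode t]; ring
  have hEconst : ∀ t, E t = E 0 := by
    intro t
    exact is_const_of_deriv_eq_zero (fun x => (hEd x).differentiableAt)
      (fun x => (hEd x).deriv) t 0
  have hE0 : E 0 = (A + s) ^ 4 / 4 - μ * (A + s) ^ 2 / 2 := by
    simp [hEdef, h0, h0']
  have hAs : 0 < A + s := by linarith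
  have hAs2 : (A + s) ^ 2 < 2 * μ := by
    have h1 : A + s < Real.sqrt 2 * s := by linarith
    nlinarith [Real.sqrt_nonneg 2]
  have hE0neg : E 0 < 0 := by
    rw [hE0]
    have key : (A + s) ^ 2 * (A + s) ^ 2 < (A + s) ^ 2 * (2 * μ) :=
      mul_lt_mul_of_pos_left hAs2 (pow_pos hAs 2)
    nlinarith [key]
  have hVle : ∀ t, (u t) ^ 4 / 4 - μ * (u t) ^ 2 / 2 ≤
      (A + s) ^ 4 / 4 - μ * (A + s) ^ 2 / 2 := by
    intro t
    have h := hEconst t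
    simp only [hEdef, h0, h0'] at h
    nlinarith [sq_nonneg (deriv u t)]
  have hV0neg : (A + s) ^ 4 / 4 - μ * (A + s) ^ 2 / 2 < 0 := by rw [hE0] at hE0neg; exact hE0neg
  have hne : ∀ t, u t ≠ 0 := by
    intro t h
    have := hVle t
    rw [h] at this
    norm_num at this
    linarith
  have hpos : ∀ t, 0 < u t := by
    intro t
    by_contra hle
    push_neg at hle
    have hlt : u t < 0 := lt_of_le_of_ne hle (hne t)
    have h0pos : 0 < u 0 := by rw [h0]; exact hAs
    have : (0 : ℝ) ∈ Set.uIcc (u t) (u 0) := Set.mem_uIcc.mpr (Or.inl ⟨hlt.le, h0pos.le⟩)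
    obtain ⟨c, _, hc⟩ := intermediate_value_uIcc (hu.continuous.continuousOn) this
    exact hne c hc
  intro t
  refine ⟨hpos t, ?_⟩
  by_contra hgt
  push_neg at hgt
  have hV := hVle t
  have hba : (A + s) ^ 2 < (u t) ^ 2 := by nlinarith [hpos t]
  have ha2 : μ ≤ (A + s) ^ 2 := by nlinarith
  have key : 0 < ((u t) ^ 2 - (A + s) ^ 2) * ((u t) ^ 2 + (A + s) ^ 2 - 2 * μ) :=
    mul_pos (by linarith) (by linarith)
  nlinarith [key]
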